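/- (Energy identity for invariant measures of the GHGF semi-flow.) Let H : ℝ^n × ℝ^n → ℝ be a Tonelli Hamiltonian, ℤ^n-periodic in the x variable, and let φ : ℝ^n → ℝ be ℤ^n-periodic, Lipschitz and semiconcave. Let S⁺ ⊂ C([0,∞), ℝ^n) be the set of strict singular characteristics γ : [0,∞) → ℝ^n for (φ,H), endow C([0,∞), ℝ^n) with the topology of uniform convergence on compact sets, and let P^t be the shift P^t(γ)(s) = γ(t+s). Let μ be a Borel probability measure on C([0,∞), ℝ^n) concentrated on S⁺ and invariant: (P^t)_# μ = μ for all t ≥ 0. Then ∫ H(γ(0), p♯(γ(0))) dμ(γ) = − ∫ L(γ(0), H_p(γ(0), p♯(γ(0)))) dμ(γ). Moreover, if ψ : ℝ^n → ℝ is ℤ^n-periodic and Lipschitz and satisfies ψ(y) − ψ(x) ≤ A_t(x,y) + c·t for all x, y ∈ ℝ^n and all t > 0, then ∫ H(γ(0), p♯(γ(0))) dμ(γ) ≤ c. -/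

import Mathlib

open MeasureTheory Set Filter Topology intervalIntegral
open scoped RealInnerProductSpace NNReal ENNReal

noncomputable section

abbrev E (n : ℕ) := EuclideanSpace ℝ (Fin n)

variable {n : ℕ}

/-- `φ` is semiconcave with linear modulus and constant `C`. -/
def Semiconcave (C : ℝ) (φ : E n → ℝ) : Prop :=
  ConcaveOn ℝ Set.univ (fun x => φ x - C / 2 * ‖x‖ ^ 2)

/-- The superdifferential of `φ` at `x`. -/
def superdiff (φ : E n → ℝ) (x : E n) : Set (E n) :=
  {p | ∀ ε > 0, ∀ᶠ y in 𝓝 x, φ y - φ x - ⟪p, y - x⟫ ≤ ε * ‖y - x‖}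

/-- Tonelli Hamiltonian. -/
structure IsTonelli (H : E n → E n → ℝ) : Prop where
  smooth : ContDiff ℝ 2 (fun q : E n × E n => H q.1 q.2)
  posdef : ∀ x p v : E n, v ≠ 0 → 0 < iteratedFDeriv ℝ 2 (H x) p ![v, v]
  superlinear : ∀ A : ℝ, 0 ≤ A → ∃ B : ℝ, ∀ x p, A * ‖p‖ - B ≤ H x p

/-- The Tonelli Lagrangian associated to `H` via the Fenchel transform. -/
def Lag (H : E n → E n → ℝ) (x v : E n) : ℝ := ⨆ p : E n, (⟪p, v⟫ - H x p)

/-- Partial gradient of `H` in the momentum variable. -/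
def Hp (H : E n → E n → ℝ) (x p : E n) : E n := gradient (H x) p

/-- The integer vector `k` viewed as an element of `E n`. -/
def intVec (k : Fin n → ℤ) : E n :=
  (WithLp.equiv 2 (Fin n → ℝ)).symm (fun i => (k i : ℝ))

/-- `f` is `ℤⁿ`-periodic. -/
def ZPeriodic {α : Type*} (f : E n → α) : Prop :=
  ∀ (x : E n) (k : Fin n → ℤ), f (x + intVec k) = f x

/-- The fundamental solution `A_t(x,y)`: the infimum of the action over absolutely
continuous curves joining `x` to `y` in time `t`. -/
def fundSol (L : E n → E n → ℝ) (t : ℝ) (x y : E n) : ℝ :=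
  sInf {r : ℝ | ∃ ξ ξ' : ℝ → E n, ξ 0 = x ∧ ξ t = y ∧
    IntervalIntegrable ξ' MeasureTheory.volume 0 t ∧
    (∀ s ∈ Set.Icc 0 t, ξ s = x + ∫ u in (0:ℝ)..s, ξ' u) ∧
    r = ∫ s in (0:ℝ)..t, L (ξ s) (ξ' s)}

/-- The negative Lax–Oleinik operator `T⁻_t` (with `T⁻_0 = id`). -/
def Tminus (L : E n → E n → ℝ) (t : ℝ) (φ : E n → ℝ) (x : E n) : ℝ :=
  if t ≤ 0 then φ x else ⨅ y : E n, (φ y + fundSol L t y x)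

/-- The positive Lax–Oleinik operator `T⁺_t` (with `T⁺_0 = id`). -/
def Tplus (L : E n → E n → ℝ) (t : ℝ) (φ : E n → ℝ) (x : E n) : ℝ :=
  if t ≤ 0 then φ x else ⨆ y : E n, (φ y - fundSol L t x y)

/-- `φ` is a weak KAM solution with critical value `c`. -/
def WeakKAM (L : E n → E n → ℝ) (c : ℝ) (φ : E n → ℝ) : Prop :=
  ∀ t ≥ (0:ℝ), ∀ x, Tminus L t φ x = φ x - c * t

/-- The absolutely continuous curve `γ`, with a.e. derivative `γ'`, is
`(φ,c)`-calibrated on `[a,b]`. -/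
def IsCalibratedOn (L : E n → E n → ℝ) (c : ℝ) (φ : E n → ℝ) (a b : ℝ)
    (γ γ' : ℝ → E n) : Prop :=
  IntervalIntegrable γ' MeasureTheory.volume a b ∧
  (∀ s ∈ Set.Icc a b, γ s = γ a + ∫ u in a..s, γ' u) ∧
  ∀ s₁ ∈ Set.Icc a b, ∀ s₂ ∈ Set.Icc a b, s₁ ≤ s₂ →
    φ (γ s₂) - φ (γ s₁) = (∫ s in s₁..s₂, L (γ s) (γ' s)) + c * (s₂ - s₁)

/-- The cut time `τ_φ(x)` of `φ` at `x` (valued in `ℝ≥0∞`). -/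
def cutTime (L : E n → E n → ℝ) (c : ℝ) (φ : E n → ℝ) (x : E n) : ℝ≥0∞ :=
  ⨆ t ∈ {t : ℝ | 0 ≤ t ∧ ∃ γ γ' : ℝ → E n, γ 0 = x ∧ IsCalibratedOn L c φ 0 t γ γ'},
    ENNReal.ofReal t

/-- The cut locus of `φ`. -/
def cutLocus (L : E n → E n → ℝ) (c : ℝ) (φ : E n → ℝ) : Set (E n) :=
  {x | cutTime L c φ x = 0}

/-- `ps` is the minimal energy selection of `D⁺φ` for the pair `(φ, H)`. -/
def MinSel (φ : E n → ℝ) (H : E n → E n → ℝ) (ps : E n → E n) : Prop :=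
  ∀ x, ps x ∈ superdiff φ x ∧ ∀ q ∈ superdiff φ x, H x (ps x) ≤ H x q

/-- Borel σ-algebra on the path space `C([0,∞), ℝⁿ)` (compact-open topology). -/
instance pathSpaceMeasurable : MeasurableSpace C(ℝ≥0, E n) := borel _

/-- The shift map `P^t(γ)(s) = γ(t+s)` on the path space. -/
def shiftMap (t : ℝ≥0) (γ : C(ℝ≥0, E n)) : C(ℝ≥0, E n) :=
  γ.comp ⟨fun s => t + s, by fun_prop⟩

/-- A path `γ : [0,∞) → ℝⁿ`, extended to `ℝ` by `γ(t ∨ 0)`. -/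
def ext (γ : C(ℝ≥0, E n)) : ℝ → E n := fun t => γ (Real.toNNReal t)

/-- `γ` is a strict singular characteristic for `(φ, H)` on `[0,∞)`. -/
def IsSSC (H : E n → E n → ℝ) (ps : E n → E n) (γ : C(ℝ≥0, E n)) : Prop :=
  (∃ K : ℝ≥0, LipschitzOnWith K (ext γ) (Set.Ici 0)) ∧
  ∀ᵐ t ∂(MeasureTheory.volume.restrict (Set.Ici (0:ℝ))),
    HasDerivWithinAt (ext γ) (Hp H (ext γ t) (ps (ext γ t))) (Set.Ici 0) t


/-! ### Auxiliary lemmas -/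

instance pathSpaceBorel : BorelSpace C(ℝ≥0, E n) := ⟨rfl⟩

section FTC

/-- FTC for Lipschitz functions with a.e. derivative on `(0,∞)`. -/
lemma lip_ftc {F : Type*} [NormedAddCommGroup F] [NormedSpace ℝ F] [CompleteSpace F]
    (h : ℝ → F) (K : ℝ≥0) (hLip : LipschitzWith K h) (G : ℝ → F)
    (hae : ∀ᵐ t ∂(volume.restrict (Set.Ioi (0:ℝ))), HasDerivAt h (G t) t)
    (s : ℝ) (hs : 0 ≤ s) : h s - h 0 = ∫ t in (0:ℝ)..s, G t := by
  have hcont : Continuous h := hLip.continuous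
  have hint : ∀ a b : ℝ, IntervalIntegrable h volume a b := fun a b =>
    hcont.intervalIntegrable a b
  set δ : ℕ → ℝ := fun k => 1 / (k + 1) with hδ
  have hδpos : ∀ k, 0 < δ k := fun k => by positivity
  have hδlim : Tendsto δ atTop (𝓝 0) := tendsto_one_div_add_atTop_nhds_zero_nat
  set g : ℕ → ℝ → F := fun k t => (δ k)⁻¹ • (h (t + δ k) - h t) with hg
  have stepA : ∀ k, ∫ t in (0:ℝ)..s, g k t =
      (δ k)⁻¹ • ((∫ t in s..(s + δ k), h t) - ∫ t in (0:ℝ)..(δ k), h t) := by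
    intro k
    have h1 : ∫ t in (0:ℝ)..s, h (t + δ k) = ∫ t in (δ k)..(s + δ k), h t := by
      rw [intervalIntegral.integral_comp_add_right]
      norm_num
    have h1' : IntervalIntegrable (fun t => h (t + δ k)) volume 0 s := by
      simpa [Function.comp_def] using
        (hcont.comp (continuous_add_right (δ k))).intervalIntegrable 0 s
    have h2 : (∫ t in (0:ℝ)..s, g k t) =
        (δ k)⁻¹ • ((∫ t in (0:ℝ)..s, h (t + δ k)) - ∫ t in (0:ℝ)..s, h t) := by
      rw [← intervalIntegral.integral_sub h1' (hint 0 s), ← intervalIntegral.integral_smul]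
    rw [h2, h1]
    congr 1
    have e1 : (∫ t in (δ k)..(s + δ k), h t) = (∫ t in (δ k)..s, h t) + ∫ t in s..(s+δ k), h t :=
      (intervalIntegral.integral_add_adjacent_intervals (hint _ _) (hint _ _)).symm
    have e2 : (∫ t in (0:ℝ)..s, h t) = (∫ t in (0:ℝ)..(δ k), h t) + ∫ t in (δ k)..s, h t :=
      (intervalIntegral.integral_add_adjacent_intervals (hint _ _) (hint _ _)).symm
    rw [e1, e2]; abel
  have key : ∀ a : ℝ, Tendsto (fun k => (δ k)⁻¹ • (∫ t in a..(a + δ k), h t)) atTop (𝓝 (h a)) := by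
    intro a
    have hb : ∀ k, ‖(δ k)⁻¹ • (∫ t in a..(a + δ k), h t) - h a‖ ≤ K * δ k := by
      intro k
      have e : (δ k)⁻¹ • (∫ t in a..(a + δ k), h t) - h a
          = (δ k)⁻¹ • (∫ t in a..(a + δ k), (h t - h a)) := by
        rw [intervalIntegral.integral_sub (hint _ _) intervalIntegrable_const,
          intervalIntegral.integral_const, smul_sub, add_sub_cancel_left, smul_smul,
          inv_mul_cancel₀ (hδpos k).ne', one_smul]
      have hnorm : ‖∫ t in a..(a + δ k), (h t - h a)‖ ≤ (K * δ k) * |a + δ k - a| := by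
        apply intervalIntegral.norm_integral_le_of_norm_le_const
        intro x hx
        rw [Set.uIoc_of_le (by linarith [hδpos k] : a ≤ a + δ k)] at hx
        have h1 : ‖h x - h a‖ ≤ K * |x - a| := by
          simpa [dist_eq_norm, Real.dist_eq] using hLip.dist_le_mul x a
        have h2 : |x - a| ≤ δ k := by
          rw [abs_of_pos (by linarith [hx.1] : 0 < x - a)]
          linarith [hx.2]
        calc ‖h x - h a‖ ≤ K * |x - a| := h1
          _ ≤ K * δ k := mul_le_mul_of_nonneg_left h2 (NNReal.coe_nonneg K)
      have habs : |a + δ k - a| = δ k := by rw [add_sub_cancel_left, abs_of_pos (hδpos k)]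
      rw [habs] at hnorm
      rw [e, norm_smul, norm_inv, Real.norm_eq_abs, abs_of_pos (hδpos k)]
      calc (δ k)⁻¹ * ‖∫ t in a..(a + δ k), (h t - h a)‖
          ≤ (δ k)⁻¹ * ((K * δ k) * δ k) :=
            mul_le_mul_of_nonneg_left hnorm (le_of_lt (inv_pos.2 (hδpos k)))
        _ = K * δ k := by field_simp
    have hKδ : Tendsto (fun k => (K:ℝ) * δ k) atTop (𝓝 0) := by
      simpa using (tendsto_const_nhds (x := (K:ℝ))).mul hδlim
    exact tendsto_iff_norm_sub_tendsto_zero.2 (squeeze_zero (fun k => norm_nonneg _) hb hKδ)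
  have stepB : Tendsto (fun k => (δ k)⁻¹ • ((∫ t in s..(s + δ k), h t) - ∫ t in (0:ℝ)..(δ k), h t))
      atTop (𝓝 (h s - h 0)) := by
    have k0 : Tendsto (fun k => (δ k)⁻¹ • (∫ t in (0:ℝ)..(δ k), h t)) atTop (𝓝 (h 0)) := by
      simpa using key 0
    simpa [smul_sub] using (key s).sub k0
  have hsubset : Set.uIoc (0:ℝ) s ⊆ Set.Ioi 0 := by
    rw [Set.uIoc_of_le hs]; exact fun x hx => hx.1
  have stepC : Tendsto (fun k => ∫ t in (0:ℝ)..s, g k t) atTop (𝓝 (∫ t in (0:ℝ)..s, G t)) := by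
    have haeG : ∀ᵐ t ∂(volume : Measure ℝ), t ∈ Set.Ioi (0:ℝ) → HasDerivAt h (G t) t :=
      (ae_restrict_iff' measurableSet_Ioi).1 hae
    apply _root_.intervalIntegral.tendsto_integral_filter_of_dominated_convergence (fun _ => (K:ℝ))
    · filter_upwards with k
      exact (((hcont.comp (continuous_add_right (δ k))).sub hcont).const_smul
        ((δ k)⁻¹)).aestronglyMeasurable
    · filter_upwards with k
      filter_upwards with t _
      have h1 : ‖h (t + δ k) - h t‖ ≤ K * δ k := by
        have h2 : ‖h (t + δ k) - h t‖ ≤ K * |t + δ k - t| := by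
          simpa [dist_eq_norm, Real.dist_eq] using hLip.dist_le_mul (t + δ k) t
        simpa [abs_of_pos (hδpos k)] using h2
      rw [hg]
      simp only [norm_smul, norm_inv, Real.norm_eq_abs, abs_of_pos (hδpos k)]
      calc (δ k)⁻¹ * ‖h (t + δ k) - h t‖ ≤ (δ k)⁻¹ * (K * δ k) :=
            mul_le_mul_of_nonneg_left h1 (le_of_lt (inv_pos.2 (hδpos k)))
        _ = K := by rw [mul_comm (K:ℝ), ← mul_assoc, inv_mul_cancel₀ (hδpos k).ne', one_mul]
    · exact intervalIntegrable_const
    · filter_upwards [haeG] with t ht' htmem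
      have ht : HasDerivAt h (G t) t := ht' (hsubset htmem)
      have hslope := hasDerivAt_iff_tendsto_slope.1 ht
      have hseq : Tendsto (fun k => t + δ k) atTop (𝓝[≠] t) := by
        apply tendsto_nhdsWithin_of_tendsto_nhds_of_eventually_within
        · simpa using (tendsto_const_nhds (x := t)).add hδlim
        · filter_upwards with k
          simp only [Set.mem_compl_iff, Set.mem_singleton_iff]
          intro hcontr
          have := hδpos k
          nlinarith [congrArg (fun z => z - t) hcontr]
      have h3 : Tendsto (fun k => slope h t (t + δ k)) atTop (𝓝 (G t)) := hslope.comp hseq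
      convert h3 using 2 with k
      rw [hg, slope_def_module]
      simp [add_sub_cancel_left]
  have hfin := tendsto_nhds_unique stepC (by
    have he : (fun k => ∫ t in (0:ℝ)..s, g k t) =
        fun k => (δ k)⁻¹ • ((∫ t in s..(s + δ k), h t) - ∫ t in (0:ℝ)..(δ k), h t) :=
      funext stepA
    rw [he]; exact stepB)
  rw [← hfin]

end FTC

section Fenchel

lemma contDiff_Hx {H : E n → E n → ℝ} (hH : IsTonelli H) (x : E n) : ContDiff ℝ 2 (H x) :=
  hH.smooth.comp (contDiff_const.prodMk contDiff_id)

lemma inner_Hp {H : E n → E n → ℝ} (x p u : E n) :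
    ⟪Hp H x p, u⟫ = fderiv ℝ (H x) p u := by
  rw [Hp, gradient, InnerProductSpace.toDual_symm_apply]

/-- Gradient inequality: convexity of `H x` in the momentum. -/
lemma grad_ineq {H : E n → E n → ℝ} (hH : IsTonelli H) (x p q : E n) :
    H x p + ⟪Hp H x p, q - p⟫ ≤ H x q := by
  have hHx : ContDiff ℝ 2 (H x) := contDiff_Hx hH x
  rcases eq_or_ne q p with rfl | hq
  · simp only [sub_self, inner_zero_right, add_zero, le_refl]
  set u := q - p with hu
  have hune : u ≠ 0 := sub_ne_zero.2 hq
  set c : ℝ → E n := fun s => p + s • u with hc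
  have hcd : ∀ s : ℝ, HasDerivAt c u s := by
    intro s
    have := ((hasDerivAt_id s).smul_const u).const_add p
    simp only [id_eq, one_smul] at this
    exact this
  set f : ℝ → ℝ := fun s => H x (c s) with hf
  set f' : ℝ → ℝ := fun s => fderiv ℝ (H x) (c s) u with hf'
  have hfd : ∀ s : ℝ, HasDerivAt f (f' s) s := fun s =>
    ((hHx.differentiable two_ne_zero).differentiableAt.hasFDerivAt).comp_hasDerivAt s (hcd s)
  set f2 : ℝ → ℝ := fun s => fderiv ℝ (fderiv ℝ (H x)) (c s) u u with hf2
  have hφ2 : Differentiable ℝ (fderiv ℝ (H x)) := by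
    have h1 : ContDiff ℝ 1 (fderiv ℝ (H x)) := hHx.fderiv_right (by norm_num)
    exact h1.differentiable one_ne_zero
  have hfd2 : ∀ s : ℝ, HasDerivAt f' (f2 s) s := by
    intro s
    have h1 : HasDerivAt (fun s => fderiv ℝ (H x) (c s)) (fderiv ℝ (fderiv ℝ (H x)) (c s) u) s :=
      (hφ2.differentiableAt.hasFDerivAt).comp_hasDerivAt s (hcd s)
    simpa using h1.clm_apply (hasDerivAt_const s u)
  have hf2nn : ∀ s : ℝ, 0 ≤ f2 s := by
    intro s
    have h1 := hH.posdef x (c s) u hune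
    rw [iteratedFDeriv_two_apply] at h1
    simpa [Matrix.cons_val_zero, Matrix.cons_val_one, Matrix.head_cons] using h1.le
  have hmono : Monotone f' := by
    apply monotone_of_deriv_nonneg (fun s => (hfd2 s).differentiableAt)
    intro s; rw [(hfd2 s).deriv]; exact hf2nn s
  obtain ⟨c₀, hc₀, hslope⟩ := exists_hasDerivAt_eq_slope f f' (by norm_num : (0:ℝ) < 1)
    ((hHx.continuous.comp (by continuity : Continuous c)).continuousOn)
    (fun s _ => hfd s)
  have hval0 : f 0 = H x p := by simp [hf, hc]
  have hval1 : f 1 = H x q := by simp [hf, hc, hu]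
  have hm : f' 0 ≤ f' c₀ := hmono hc₀.1.le
  rw [hslope, hval0, hval1] at hm
  have hc0 : c 0 = p := by simp [hc]
  have hinner : f' 0 = ⟪Hp H x p, u⟫ := by
    show fderiv ℝ (H x) (c 0) u = _
    rw [hc0, ← inner_Hp]
  have h1 : f' 0 ≤ H x q - H x p := by simpa using hm
  rw [hinner] at h1
  linarith

lemma lag_bddAbove {H : E n → E n → ℝ} (hH : IsTonelli H) (x v : E n) :
    BddAbove (Set.range fun p : E n => ⟪p, v⟫ - H x p) := by
  obtain ⟨B, hB⟩ := hH.superlinear ‖v‖ (norm_nonneg v)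
  refine ⟨B, ?_⟩
  rintro r ⟨p, rfl⟩
  show ⟪p, v⟫ - H x p ≤ B
  have h1 : ⟪p, v⟫ ≤ ‖p‖ * ‖v‖ := real_inner_le_norm p v
  have h2 := hB x p
  nlinarith [norm_nonneg p, norm_nonneg v]

/-- Fenchel identity along the gradient. -/
lemma fenchel {H : E n → E n → ℝ} (hH : IsTonelli H) (x p : E n) :
    Lag H x (Hp H x p) = ⟪p, Hp H x p⟫ - H x p := by
  set v := Hp H x p with hv
  apply le_antisymm
  · apply ciSup_le
    intro q
    have h1 := grad_ineq hH x p q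
    have hsub : ⟪v, q - p⟫ = ⟪q, v⟫ - ⟪p, v⟫ := by
      rw [inner_sub_right, real_inner_comm v q, real_inner_comm v p]
    rw [← hv] at h1
    linarith
  · exact le_ciSup (lag_bddAbove hH x v) p

lemma lag_lower {H : E n → E n → ℝ} (hH : IsTonelli H) (x v : E n) :
    - H x 0 ≤ Lag H x v := by
  have h1 := le_ciSup (lag_bddAbove hH x v) (0 : E n)
  simpa [Lag] using h1

end Fenchel

section Periodic

/-- fractional part -/
def fracZ (x : E n) : E n := x - intVec (fun i => ⌊x i⌋)

lemma fracZ_add (x : E n) : fracZ x + intVec (fun i => ⌊x i⌋) = x := by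
  simp [fracZ]

lemma fracZ_norm_le (x : E n) : ‖fracZ x‖ ≤ Real.sqrt n := by
  rw [EuclideanSpace.norm_eq]
  apply Real.sqrt_le_sqrt
  have hcoord : ∀ i : Fin n, ‖fracZ x i‖ ^ 2 ≤ 1 := by
    intro i
    have h1 : fracZ x i = x i - (⌊x i⌋ : ℝ) := by
      simp [fracZ, intVec, PiLp.sub_apply, WithLp.equiv_symm_apply, PiLp.toLp_apply]
    have h2 : x i - (⌊x i⌋ : ℝ) = Int.fract (x i) := (Int.self_sub_floor (x i)).symm
    rw [h1, h2, Real.norm_eq_abs, abs_of_nonneg (Int.fract_nonneg _)]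
    nlinarith [Int.fract_nonneg (x i), Int.fract_lt_one (x i)]
  calc (∑ i, ‖fracZ x i‖ ^ 2) ≤ ∑ _i : Fin n, (1:ℝ) := Finset.sum_le_sum (fun i _ => hcoord i)
    _ = n := by simp

lemma ZPeriodic.eq_fracZ {α : Type*} {f : E n → α} (hf : ZPeriodic f) (x : E n) :
    f x = f (fracZ x) := by
  conv_lhs => rw [← fracZ_add x]
  rw [hf]

/-- A continuous function periodic in its first variable is bounded on `univ ×ˢ ball`. -/
lemma periodic_bound {F : Type*} [NormedAddCommGroup F] {f : E n × E n → F}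
    (hf : Continuous f) (hper : ∀ p : E n, ZPeriodic (fun x => f (x, p))) (κ : ℝ) :
    ∃ M : ℝ, 0 ≤ M ∧ ∀ x p : E n, ‖p‖ ≤ κ → ‖f (x, p)‖ ≤ M := by
  obtain ⟨M, hM⟩ := (((isCompact_closedBall (0 : E n) (Real.sqrt n)).prod
    (isCompact_closedBall (0 : E n) κ))).exists_bound_of_continuousOn hf.continuousOn
  refine ⟨max M 0, le_max_right _ _, fun x p hp => ?_⟩
  have h1 : f (x, p) = f (fracZ x, p) := (hper p).eq_fracZ x
  rw [h1]
  refine le_trans (hM (fracZ x, p) ?_) (le_max_left _ _)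
  constructor
  · simpa [Metric.mem_closedBall, dist_eq_norm] using fracZ_norm_le x
  · simpa [Metric.mem_closedBall, dist_eq_norm] using hp

/-- single-variable version -/
lemma periodic_bound₁ {F : Type*} [NormedAddCommGroup F] {f : E n → F}
    (hf : Continuous f) (hper : ZPeriodic f) :
    ∃ M : ℝ, 0 ≤ M ∧ ∀ x : E n, ‖f x‖ ≤ M := by
  obtain ⟨M, hM0, hM⟩ := periodic_bound (f := fun q : E n × E n => f q.1)
    (hf.comp continuous_fst) (fun p x k => hper x k) 0
  exact ⟨M, hM0, fun x => hM x 0 (by simp)⟩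

lemma fderiv_Hx_eq {H : E n → E n → ℝ} (hH : IsTonelli H) (x p : E n) :
    fderiv ℝ (H x) p = (fderiv ℝ (fun q : E n × E n => H q.1 q.2) (x, p)).comp
      (ContinuousLinearMap.inr ℝ (E n) (E n)) := by
  have hd : HasFDerivAt (fun q : E n × E n => H q.1 q.2)
      (fderiv ℝ (fun q : E n × E n => H q.1 q.2) (x, p)) (x, p) :=
    (hH.smooth.differentiable two_ne_zero).differentiableAt.hasFDerivAt
  exact (hd.comp p (hasFDerivAt_prodMk_right x p)).fderiv

lemma hp_cont {H : E n → E n → ℝ} (hH : IsTonelli H) :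
    Continuous (fun q : E n × E n => Hp H q.1 q.2) := by
  have h1 : Continuous (fderiv ℝ (fun q : E n × E n => H q.1 q.2)) :=
    hH.smooth.continuous_fderiv two_ne_zero
  have h2 : Continuous (fun q : E n × E n =>
      (fderiv ℝ (fun q : E n × E n => H q.1 q.2) q).comp
        (ContinuousLinearMap.inr ℝ (E n) (E n))) :=
    h1.clm_comp continuous_const
  have h3 : (fun q : E n × E n => Hp H q.1 q.2) = fun q =>
      (InnerProductSpace.toDual ℝ (E n)).symm
        ((fderiv ℝ (fun q : E n × E n => H q.1 q.2) q).comp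
          (ContinuousLinearMap.inr ℝ (E n) (E n))) := by
    funext q
    rw [Hp, gradient, fderiv_Hx_eq hH]
  rw [h3]
  exact (InnerProductSpace.toDual ℝ (E n)).symm.continuous.comp h2

lemma hp_periodic {H : E n → E n → ℝ}
    (hper : ∀ p : E n, ZPeriodic (fun x => H x p)) (p : E n) :
    ZPeriodic (fun x => Hp H x p) := by
  intro x k
  have h1 : H (x + intVec k) = H x := funext fun q => hper q x k
  simp only [Hp, h1]

end Periodic

section Superdiff

lemma superdiff_norm_le {φ : E n → ℝ} {κ : ℝ≥0} (hφ : LipschitzWith κ φ)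
    {x p : E n} (hp : p ∈ superdiff φ x) : ‖p‖ ≤ κ := by
  by_contra hcon
  push_neg at hcon
  set ε := (‖p‖ - κ) / 2 with hε
  have hεpos : 0 < ε := by simp only [hε]; linarith
  have hppos : (0:ℝ) < ‖p‖ := lt_of_le_of_lt (NNReal.coe_nonneg κ) hcon
  have hev : ∀ᶠ y in 𝓝 x, φ y - φ x - ⟪p, y - x⟫ ≤ ε * ‖y - x‖ := hp ε hεpos
  have htend : Tendsto (fun s : ℝ => x - s • p) (𝓝[>] 0) (𝓝 x) := by
    have hc : Continuous (fun s : ℝ => x - s • p) := by fun_prop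
    have h1 : Tendsto (fun s : ℝ => x - s • p) (𝓝 0) (𝓝 x) := by
      simpa using hc.tendsto (0:ℝ)
    exact h1.mono_left nhdsWithin_le_nhds
  have hev2 : ∀ᶠ s : ℝ in 𝓝[>] 0,
      φ (x - s • p) - φ x - ⟪p, (x - s • p) - x⟫ ≤ ε * ‖(x - s • p) - x‖ :=
    htend.eventually hev
  obtain ⟨s, hsineq, hspos⟩ := (hev2.and self_mem_nhdsWithin).exists
  have hspos : 0 < s := hspos
  have h1 : (x - s • p) - x = -(s • p) := by abel
  have h2 : ⟪p, (x - s • p) - x⟫ = -(s * ‖p‖ ^ 2) := by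
    rw [h1, inner_neg_right, real_inner_smul_right, real_inner_self_eq_norm_sq]
  have h3 : ‖(x - s • p) - x‖ = s * ‖p‖ := by
    rw [h1, norm_neg, norm_smul, Real.norm_eq_abs, abs_of_pos hspos]
  have h4 : φ x - φ (x - s • p) ≤ κ * (s * ‖p‖) := by
    have hLip := hφ.dist_le_mul x (x - s • p)
    rw [dist_eq_norm, dist_eq_norm] at hLip
    have hd : ‖x - (x - s • p)‖ = s * ‖p‖ := by
      rw [show x - (x - s • p) = s • p by abel, norm_smul, Real.norm_eq_abs,
        abs_of_pos hspos]
    rw [hd] at hLip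
    calc φ x - φ (x - s • p) ≤ |φ x - φ (x - s • p)| := le_abs_self _
      _ ≤ κ * (s * ‖p‖) := by rw [← Real.norm_eq_abs]; exact hLip
  rw [h2, h3] at hsineq
  have hsum : s * ‖p‖ ^ 2 ≤ (ε + κ) * (s * ‖p‖) := by nlinarith
  have hlt : ε + κ < ‖p‖ := by rw [hε]; linarith
  nlinarith [mul_pos (mul_pos hspos hppos) (sub_pos.2 hlt)]

/-- Chain rule through the superdifferential at a point of differentiability. -/
lemma superdiff_chain_pt {φ : E n → ℝ} {x p v : E n} {ξ : ℝ → E n} {t : ℝ} {d : ℝ}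
    (hx : ξ t = x) (hp : p ∈ superdiff φ x)
    (hξ : HasDerivAt ξ v t) (hh : HasDerivAt (fun s => φ (ξ s)) d t) :
    d = ⟪p, v⟫ := by
  have hslopeh := hasDerivAt_iff_tendsto_slope.1 hh
  have hslopeξ := hasDerivAt_iff_tendsto_slope.1 hξ
  have key : ∀ ε : ℝ, 0 < ε → |d - ⟪p, v⟫| ≤ ε * ‖v‖ := by
    intro ε hε
    have hev : ∀ᶠ s in 𝓝 t, φ (ξ s) - φ (ξ t) - ⟪p, ξ s - ξ t⟫ ≤ ε * ‖ξ s - ξ t‖ := by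
      have h1 := hp ε hε
      rw [← hx] at h1
      exact (hξ.continuousAt.tendsto).eventually h1
    have hmonoR : 𝓝[>] t ≤ 𝓝[≠] t :=
      nhdsWithin_mono t (fun s hs => ne_of_gt hs)
    have hmonoL : 𝓝[<] t ≤ 𝓝[≠] t :=
      nhdsWithin_mono t (fun s hs => ne_of_lt hs)
    have hslR : Tendsto (slope ξ t) (𝓝[>] t) (𝓝 v) := hslopeξ.mono_left hmonoR
    have hslL : Tendsto (slope ξ t) (𝓝[<] t) (𝓝 v) := hslopeξ.mono_left hmonoL
    have hAR : Tendsto (fun s => ⟪p, slope ξ t s⟫ + ε * ‖slope ξ t s‖) (𝓝[>] t)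
        (𝓝 (⟪p, v⟫ + ε * ‖v‖)) :=
      (tendsto_const_nhds.inner hslR).add (hslR.norm.const_mul ε)
    have hAL : Tendsto (fun s => ⟪p, slope ξ t s⟫ - ε * ‖slope ξ t s‖) (𝓝[<] t)
        (𝓝 (⟪p, v⟫ - ε * ‖v‖)) :=
      (tendsto_const_nhds.inner hslL).sub (hslL.norm.const_mul ε)
    have hub : d ≤ ⟪p, v⟫ + ε * ‖v‖ := by
      refine le_of_tendsto_of_tendsto (hslopeh.mono_left hmonoR) hAR ?_
      have hev' : ∀ᶠ s in 𝓝[>] t,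
          φ (ξ s) - φ (ξ t) - ⟪p, ξ s - ξ t⟫ ≤ ε * ‖ξ s - ξ t‖ :=
        hev.filter_mono nhdsWithin_le_nhds
      filter_upwards [hev', self_mem_nhdsWithin] with s hs hst
      rw [Set.mem_Ioi] at hst
      have hpos : 0 < s - t := by linarith
      have e1 : slope (fun s => φ (ξ s)) t s = (s - t)⁻¹ * (φ (ξ s) - φ (ξ t)) := by
        rw [slope_def_field]; field_simp
      have e2 : ⟪p, slope ξ t s⟫ = (s - t)⁻¹ * ⟪p, ξ s - ξ t⟫ := by
        rw [slope_def_module, real_inner_smul_right]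
      have e3 : ‖slope ξ t s‖ = (s - t)⁻¹ * ‖ξ s - ξ t‖ := by
        rw [slope_def_module, norm_smul, Real.norm_eq_abs, abs_of_pos (inv_pos.2 hpos)]
      show slope (fun s => φ (ξ s)) t s ≤ ⟪p, slope ξ t s⟫ + ε * ‖slope ξ t s‖
      rw [e1, e2, e3]
      have h5 := mul_le_mul_of_nonneg_left hs (le_of_lt (inv_pos.2 hpos))
      ring_nf
      ring_nf at h5
      linarith
    have hlb : ⟪p, v⟫ - ε * ‖v‖ ≤ d := by
      refine le_of_tendsto_of_tendsto hAL (hslopeh.mono_left hmonoL) ?_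
      have hev' : ∀ᶠ s in 𝓝[<] t,
          φ (ξ s) - φ (ξ t) - ⟪p, ξ s - ξ t⟫ ≤ ε * ‖ξ s - ξ t‖ :=
        hev.filter_mono nhdsWithin_le_nhds
      filter_upwards [hev', self_mem_nhdsWithin] with s hs hst
      rw [Set.mem_Iio] at hst
      have hneg : s - t < 0 := by linarith
      have e1 : slope (fun s => φ (ξ s)) t s = (s - t)⁻¹ * (φ (ξ s) - φ (ξ t)) := by
        rw [slope_def_field]; field_simp
      have e2 : ⟪p, slope ξ t s⟫ = (s - t)⁻¹ * ⟪p, ξ s - ξ t⟫ := by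
        rw [slope_def_module, real_inner_smul_right]
      have e3 : ‖slope ξ t s‖ = -((s - t)⁻¹ * ‖ξ s - ξ t‖) := by
        rw [slope_def_module, norm_smul, Real.norm_eq_abs, abs_of_neg (inv_lt_zero.2 hneg)]
        ring
      show ⟪p, slope ξ t s⟫ - ε * ‖slope ξ t s‖ ≤ slope (fun s => φ (ξ s)) t s
      rw [e1, e2, e3]
      have h5 := mul_le_mul_of_nonpos_left hs (le_of_lt (inv_lt_zero.2 hneg))
      ring_nf
      ring_nf at h5
      linarith
    rw [abs_le]
    constructor <;> linarith
  by_contra hne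
  have habs : 0 < |d - ⟪p, v⟫| := abs_pos.2 (sub_ne_zero.2 hne)
  have hv1 : (0:ℝ) < ‖v‖ + 1 := by positivity
  have hk := key (|d - ⟪p, v⟫| / (2 * (‖v‖ + 1))) (by positivity)
  have h2 : |d - ⟪p, v⟫| / (2 * (‖v‖ + 1)) * ‖v‖ < |d - ⟪p, v⟫| := by
    rw [div_mul_eq_mul_div, div_lt_iff₀ (by positivity)]
    nlinarith [norm_nonneg v]
  linarith

end Superdiff

section PathSpace

lemma ext_lipschitz {γ : C(ℝ≥0, E n)} {K : ℝ≥0}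
    (hK : LipschitzOnWith K (ext γ) (Set.Ici 0)) : LipschitzWith K (ext γ) := by
  intro s t
  have hmax : ∀ u : ℝ, ext γ u = ext γ (max u 0) := by
    intro u
    show γ (Real.toNNReal u) = γ (Real.toNNReal (max u 0))
    congr 1
    rcases le_or_gt 0 u with h | h
    · rw [max_eq_left h]
    · rw [max_eq_right h.le, Real.toNNReal_of_nonpos h.le, Real.toNNReal_zero]
  rw [hmax s, hmax t]
  calc edist (ext γ (max s 0)) (ext γ (max t 0)) ≤ K * edist (max s 0) (max t 0) :=
        hK (Set.mem_Ici.2 (le_max_right _ _)) (Set.mem_Ici.2 (le_max_right _ _))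
    _ ≤ K * edist s t := by
        gcongr
        rw [edist_dist, edist_dist]
        apply ENNReal.ofReal_le_ofReal
        rw [Real.dist_eq, Real.dist_eq]
        exact abs_max_sub_max_le_abs s t 0
end PathSpace

/-- Energy identity for invariant measures of the GHGF semi-flow, and the bound by
any critical value `c` admitting a dominated subsolution `ψ`. -/
theorem stmt19 (H : E n → E n → ℝ) (hH : IsTonelli H)
    (hper : ∀ p : E n, ZPeriodic (fun x => H x p)) (φ : E n → ℝ)
    (hφper : ZPeriodic φ) (hφLip : ∃ κ : ℝ≥0, LipschitzWith κ φ)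
    (hφsc : ∃ C₀ : ℝ, 0 ≤ C₀ ∧ Semiconcave C₀ φ)
    (ps : E n → E n) (hps : MinSel φ H ps) (hpsmeas : Measurable ps)
    (μ : MeasureTheory.Measure C(ℝ≥0, E n))
    [MeasureTheory.IsProbabilityMeasure μ]
    (hconc : μ {γ : C(ℝ≥0, E n) | ¬ IsSSC H ps γ} = 0)
    (hinv : ∀ t : ℝ≥0, μ.map (shiftMap t) = μ) :
    (∫ γ : C(ℝ≥0, E n), H (γ 0) (ps (γ 0)) ∂μ =
      -∫ γ : C(ℝ≥0, E n), Lag H (γ 0) (Hp H (γ 0) (ps (γ 0))) ∂μ) ∧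
    ∀ (c : ℝ) (ψ : E n → ℝ), ZPeriodic ψ → (∃ κ : ℝ≥0, LipschitzWith κ ψ) →
      (∀ (x y : E n) (t : ℝ), 0 < t → ψ y - ψ x ≤ fundSol (Lag H) t x y + c * t) →
      (∫ γ : C(ℝ≥0, E n), H (γ 0) (ps (γ 0)) ∂μ) ≤ c := by
  obtain ⟨κ, hκφ⟩ := hφLip
  have hHcont : Continuous fun q : E n × E n => H q.1 q.2 := hH.smooth.continuous
  have hHpcont := hp_cont hH
  have hevalm : ∀ t : ℝ≥0, Measurable fun γ : C(ℝ≥0, E n) => γ t := fun t =>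
    (continuous_eval_const t).measurable
  set g : E n → ℝ := fun x => ⟪ps x, Hp H x (ps x)⟫ with hgdef
  set Hs : E n → ℝ := fun x => H x (ps x) with hHsdef
  have hpsHp : Measurable fun x : E n => Hp H x (ps x) :=
    hHpcont.measurable.comp (measurable_id.prodMk hpsmeas)
  have hgm : Measurable g :=
    continuous_inner.measurable.comp (hpsmeas.prodMk hpsHp)
  have hHsm : Measurable Hs := hHcont.measurable.comp (measurable_id.prodMk hpsmeas)
  have hpsb : ∀ x, ‖ps x‖ ≤ κ := fun x => superdiff_norm_le hκφ (hps x).1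
  obtain ⟨MH, hMH0, hMH⟩ := periodic_bound hHcont (fun p => hper p) κ
  obtain ⟨Mv, hMv0, hMv⟩ := periodic_bound hHpcont (fun p => hp_periodic hper p) κ
  obtain ⟨Mφ, hMφ0, hMφ⟩ := periodic_bound₁ hκφ.continuous hφper
  have hgb : ∀ x, |g x| ≤ κ * Mv := by
    intro x
    have h1 : |⟪ps x, Hp H x (ps x)⟫| ≤ ‖ps x‖ * ‖Hp H x (ps x)‖ := abs_real_inner_le_norm _ _
    have h2 := hMv x (ps x) (hpsb x)
    calc |g x| ≤ ‖ps x‖ * ‖Hp H x (ps x)‖ := h1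
      _ ≤ κ * Mv := mul_le_mul (hpsb x) h2 (norm_nonneg _) (NNReal.coe_nonneg κ)
  have hHsb : ∀ x, |Hs x| ≤ MH := fun x => by
    simpa [Real.norm_eq_abs] using hMH x (ps x) (hpsb x)
  have hφb : ∀ x, |φ x| ≤ Mφ := fun x => by simpa [Real.norm_eq_abs] using hMφ x
  have hInt : ∀ (f : E n → ℝ), Measurable f → ∀ (M : ℝ), (∀ x, |f x| ≤ M) →
      ∀ t : ℝ≥0, Integrable (fun γ : C(ℝ≥0, E n) => f (γ t)) μ := by
    intro f hf M hb t
    refine Integrable.mono' (integrable_const M) ((hf.comp (hevalm t)).aestronglyMeasurable) ?_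
    filter_upwards with γ
    simpa [Real.norm_eq_abs] using hb (γ t)
  have hshift : ∀ (f : E n → ℝ), Measurable f → ∀ t : ℝ≥0,
      ∫ γ, f (γ t) ∂μ = ∫ γ, f (γ 0) ∂μ := by
    intro f hf t
    have hsm : Measurable (shiftMap (n := n) t) := by
      have hc : Continuous (shiftMap (n := n) t) := ContinuousMap.continuous_precomp _
      exact hc.measurable
    have h0 : Measurable fun γ : C(ℝ≥0, E n) => f (γ 0) := hf.comp (hevalm 0)
    have h1 : ∫ γ, f (γ 0) ∂(μ.map (shiftMap t)) = ∫ γ, f ((shiftMap t γ) 0) ∂μ :=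
      integral_map hsm.aemeasurable h0.aestronglyMeasurable
    rw [hinv t] at h1
    have he : ∀ γ : C(ℝ≥0, E n), (shiftMap t γ) 0 = γ t := by
      intro γ; simp [shiftMap]
    simp only [he] at h1
    exact h1.symm
  have hae : ∀ᵐ γ ∂μ, IsSSC H ps γ := ae_iff.mpr hconc
  have hu : Measurable (Function.uncurry fun (t : ℝ) (γ : C(ℝ≥0, E n)) => ext γ t) := by
    apply measurable_uncurry_of_continuous_of_measurable
    · intro γ
      exact (map_continuous γ).comp continuous_real_toNNReal
    · intro t
      exact hevalm (Real.toNNReal t)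
  have huncurry : Measurable fun q : C(ℝ≥0, E n) × ℝ => ext q.1 q.2 := by
    have he : (fun q : C(ℝ≥0, E n) × ℝ => ext q.1 q.2) =
        (Function.uncurry fun (t : ℝ) (γ : C(ℝ≥0, E n)) => ext γ t) ∘ Prod.swap := rfl
    rw [he]
    exact hu.comp measurable_swap
  set ν : Measure ℝ := volume.restrict (Set.Ioc (0:ℝ) 1) with hν
  have hνuniv : ν Set.univ = 1 := by
    rw [hν, Measure.restrict_apply_univ, Real.volume_Ioc]
    norm_num
  haveI hνfin : IsFiniteMeasure ν := ⟨by rw [hνuniv]; exact ENNReal.one_lt_top⟩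
  have hfub : ∀ (f : E n → ℝ), Measurable f → ∀ (M : ℝ), (∀ x, |f x| ≤ M) →
      Integrable (fun γ => ∫ t in (0:ℝ)..1, f (ext γ t)) μ ∧
      (∫ γ, (∫ t in (0:ℝ)..1, f (ext γ t)) ∂μ) = ∫ γ, f (γ 0) ∂μ := by
    intro f hf M hb
    have hum : Measurable fun q : C(ℝ≥0, E n) × ℝ => f (ext q.1 q.2) :=
      hf.comp huncurry
    have hFint : Integrable (fun q : C(ℝ≥0, E n) × ℝ => f (ext q.1 q.2)) (μ.prod ν) := by
      refine Integrable.mono' (integrable_const M) hum.aestronglyMeasurable ?_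
      filter_upwards with q
      simpa [Real.norm_eq_abs] using hb (ext q.1 q.2)
    have hconv : (fun γ : C(ℝ≥0, E n) => ∫ t in (0:ℝ)..1, f (ext γ t)) =
        fun γ => ∫ t, f (ext γ t) ∂ν := by
      funext γ
      rw [intervalIntegral.integral_of_le zero_le_one]
    constructor
    · rw [hconv]
      exact hFint.integral_prod_left
    · rw [hconv]
      have hswap : (∫ γ, (∫ t, f (ext γ t) ∂ν) ∂μ) = ∫ t, (∫ γ, f (ext γ t) ∂μ) ∂ν :=
        integral_integral_swap hFint
      rw [hswap]
      have hin : ∀ t : ℝ, (∫ γ, f (ext γ t) ∂μ) = ∫ γ, f (γ 0) ∂μ := by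
        intro t
        have he : (fun γ : C(ℝ≥0, E n) => f (ext γ t)) =
            fun γ => f (γ (Real.toNNReal t)) := rfl
        rw [he]
        exact hshift f hf (Real.toNNReal t)
      calc (∫ t, (∫ γ, f (ext γ t) ∂μ) ∂ν) = ∫ _t, (∫ γ, f (γ 0) ∂μ) ∂ν := by
            apply MeasureTheory.integral_congr_ae
            filter_upwards with t
            exact hin t
        _ = ∫ γ, f (γ 0) ∂μ := by
            rw [MeasureTheory.integral_const, measureReal_def, hνuniv]
            simp
  have hext0 : ∀ γ : C(ℝ≥0, E n), _root_.ext γ 0 = γ 0 := by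
    intro γ
    show γ (Real.toNNReal 0) = γ 0
    rw [Real.toNNReal_zero]
  have hext1 : ∀ γ : C(ℝ≥0, E n), _root_.ext γ 1 = γ 1 := by
    intro γ
    show γ (Real.toNNReal 1) = γ 1
    rw [Real.toNNReal_one]
  have hcurve : ∀ γ : C(ℝ≥0, E n), IsSSC H ps γ →
      (∀ s : ℝ, s ∈ Set.Icc (0:ℝ) 1 →
        _root_.ext γ s = γ 0 + ∫ u in (0:ℝ)..s, Hp H (_root_.ext γ u) (ps (_root_.ext γ u))) ∧
      (φ (γ 1) - φ (γ 0) = ∫ t in (0:ℝ)..1, g (_root_.ext γ t)) ∧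
      IntervalIntegrable (fun u => Hp H (_root_.ext γ u) (ps (_root_.ext γ u))) volume 0 1 := by
    intro γ hssc
    obtain ⟨⟨K, hK⟩, hder⟩ := hssc
    have hKlip : LipschitzWith K (_root_.ext γ) := ext_lipschitz hK
    have hξc : Continuous (_root_.ext γ) := hKlip.continuous
    have hvm : Measurable (fun u : ℝ => Hp H (_root_.ext γ u) (ps (_root_.ext γ u))) :=
      hHpcont.measurable.comp (hξc.measurable.prodMk (hpsmeas.comp hξc.measurable))
    have hvb : ∀ u : ℝ, ‖Hp H (_root_.ext γ u) (ps (_root_.ext γ u))‖ ≤ Mv := fun u =>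
      hMv _ _ (hpsb _)
    have hd1 : ∀ᵐ t ∂volume.restrict (Set.Ioi (0:ℝ)),
        HasDerivAt (_root_.ext γ) (Hp H (_root_.ext γ t) (ps (_root_.ext γ t))) t := by
      have h1 := ae_restrict_of_ae_restrict_of_subset Set.Ioi_subset_Ici_self hder
      filter_upwards [h1, ae_restrict_mem measurableSet_Ioi] with t ht htm
      exact ht.hasDerivAt (Ici_mem_nhds htm)
    refine ⟨?_, ?_, ?_⟩
    · intro s hs
      have hftc := lip_ftc (_root_.ext γ) K hKlip _ hd1 s hs.1
      rw [← hext0 γ]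
      exact sub_eq_iff_eq_add'.1 hftc
    · have hrad : ∀ᵐ t ∂volume.restrict (Set.Ioi (0:ℝ)),
          DifferentiableAt ℝ (fun s => φ (_root_.ext γ s)) t :=
        ae_restrict_of_ae (hκφ.comp hKlip).ae_differentiableAt
      have hd2 : ∀ᵐ t ∂volume.restrict (Set.Ioi (0:ℝ)),
          HasDerivAt (fun s => φ (_root_.ext γ s)) (g (_root_.ext γ t)) t := by
        filter_upwards [hd1, hrad] with t ht hdiff
        have hD : HasDerivAt (fun s => φ (_root_.ext γ s))
            (deriv (fun s => φ (_root_.ext γ s)) t) t := hdiff.hasDerivAt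
        have hval := superdiff_chain_pt rfl (hps (_root_.ext γ t)).1 ht hD
        rw [show g (_root_.ext γ t) =
          ⟪ps (_root_.ext γ t), Hp H (_root_.ext γ t) (ps (_root_.ext γ t))⟫ from rfl, ← hval]
        exact hD
      have hftc := lip_ftc (fun s => φ (_root_.ext γ s)) (κ * K) (hκφ.comp hKlip) _
        hd2 1 zero_le_one
      simpa [hext0 γ, hext1 γ] using hftc
    · rw [intervalIntegrable_iff]
      refine Integrable.mono'
        ((integrableOn_const_iff (C := Mv)).2 (Or.inr ?_)) hvm.aestronglyMeasurable.restrict ?_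
      · rw [Set.uIoc_of_le zero_le_one, Real.volume_Ioc]
        norm_num
      · filter_upwards with u
        exact hvb u
  have hφm : Measurable φ := hκφ.continuous.measurable
  have h10 : ∫ γ, (φ (γ 1) - φ (γ 0)) ∂μ = 0 := by
    rw [integral_sub (hInt φ hφm Mφ hφb 1) (hInt φ hφm Mφ hφb 0),
      hshift φ hφm 1, sub_self]
  have hZ : ∫ γ, g (γ 0) ∂μ = 0 := by
    have hcong : ∫ γ, (φ (γ 1) - φ (γ 0)) ∂μ =
        ∫ γ, (∫ t in (0:ℝ)..1, g (_root_.ext γ t)) ∂μ :=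
      MeasureTheory.integral_congr_ae (hae.mono fun γ hγ => (hcurve γ hγ).2.1)
    rw [hcong, (hfub g hgm (κ * Mv) hgb).2] at h10
    exact h10
  have hLagshape : (fun γ : C(ℝ≥0, E n) => Lag H (γ 0) (Hp H (γ 0) (ps (γ 0)))) =
      fun γ => g (γ 0) - Hs (γ 0) := by
    funext γ
    exact fenchel hH (γ 0) (ps (γ 0))
  have hIntg := hInt g hgm (κ * Mv) hgb 0
  have hIntHs := hInt Hs hHsm MH hHsb 0
  have hLagint : ∫ γ, Lag H (γ 0) (Hp H (γ 0) (ps (γ 0))) ∂μ = - ∫ γ, Hs (γ 0) ∂μ := by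
    rw [show (∫ γ, Lag H (γ 0) (Hp H (γ 0) (ps (γ 0))) ∂μ)
        = ∫ γ, (g (γ 0) - Hs (γ 0)) ∂μ by rw [hLagshape],
      integral_sub hIntg hIntHs, hZ, zero_sub]
  constructor
  · show (∫ γ, Hs (γ 0) ∂μ) = - ∫ γ, Lag H (γ 0) (Hp H (γ 0) (ps (γ 0))) ∂μ
    rw [hLagint, neg_neg]
  · intro c ψ hψper hψLip hdom
    obtain ⟨κψ, hκψ⟩ := hψLip
    obtain ⟨Mψ, hMψ0, hMψ⟩ := periodic_bound₁ hκψ.continuous hψper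
    have hψb : ∀ x, |ψ x| ≤ Mψ := fun x => by simpa [Real.norm_eq_abs] using hMψ x
    have hψm : Measurable ψ := hκψ.continuous.measurable
    have hψ0 : ∫ γ, (ψ (γ 1) - ψ (γ 0)) ∂μ = 0 := by
      rw [integral_sub (hInt ψ hψm Mψ hψb 1) (hInt ψ hψm Mψ hψb 0),
        hshift ψ hψm 1, sub_self]
    set F : E n → ℝ := fun x => g x - Hs x with hFdef
    have hFm : Measurable F := hgm.sub hHsm
    have hFb : ∀ x, |F x| ≤ κ * Mv + MH := by
      intro x
      have h1 := hgb x
      have h2 := hHsb x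
      calc |F x| ≤ |g x| + |Hs x| := abs_sub (g x) (Hs x)
        _ ≤ κ * Mv + MH := add_le_add h1 h2
    have hH0b : ∀ x : E n, -MH ≤ -H x 0 := by
      intro x
      have h1 := hMH x 0 (by simp)
      rw [Real.norm_eq_abs] at h1
      have := abs_le.1 h1
      linarith [this.2]
    have hkey : ∀ᵐ γ ∂μ, ψ (γ 1) - ψ (γ 0) ≤ (∫ t in (0:ℝ)..1, F (_root_.ext γ t)) + c * 1 := by
      filter_upwards [hae] with γ hγ
      obtain ⟨hrep, _, hint⟩ := hcurve γ hγ
      set S : Set ℝ := {r : ℝ | ∃ ξ ξ' : ℝ → E n, ξ 0 = γ 0 ∧ ξ 1 = γ 1 ∧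
          IntervalIntegrable ξ' MeasureTheory.volume 0 1 ∧
          (∀ s ∈ Set.Icc (0:ℝ) 1, ξ s = γ 0 + ∫ u in (0:ℝ)..s, ξ' u) ∧
          r = ∫ s in (0:ℝ)..1, Lag H (ξ s) (ξ' s)} with hS
      have hfseq : fundSol (Lag H) 1 (γ 0) (γ 1) = sInf S := rfl
      have hmem : (∫ s in (0:ℝ)..1,
          Lag H (_root_.ext γ s) (Hp H (_root_.ext γ s) (ps (_root_.ext γ s)))) ∈ S :=
        ⟨_root_.ext γ, fun u => Hp H (_root_.ext γ u) (ps (_root_.ext γ u)),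
          hext0 γ, hext1 γ, hint, hrep, rfl⟩
      have hbdd : BddBelow S := by
        refine ⟨-MH, ?_⟩
        rintro r ⟨ξ, ξ', h0, h1, hii, hrep', rfl⟩
        by_cases hI : IntervalIntegrable (fun s => Lag H (ξ s) (ξ' s)) volume 0 1
        · calc -MH = ∫ _s in (0:ℝ)..1, (-MH : ℝ) := by simp
            _ ≤ ∫ s in (0:ℝ)..1, Lag H (ξ s) (ξ' s) := by
                apply intervalIntegral.integral_mono_on zero_le_one
                  intervalIntegrable_const hI
                intro s _
                exact le_trans (hH0b (ξ s)) (lag_lower hH (ξ s) (ξ' s))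
        · rw [intervalIntegral.integral_undef hI]
          exact neg_nonpos.2 hMH0
      have hfs : fundSol (Lag H) 1 (γ 0) (γ 1) ≤ ∫ s in (0:ℝ)..1,
          Lag H (_root_.ext γ s) (Hp H (_root_.ext γ s) (ps (_root_.ext γ s))) := by
        rw [hfseq]
        exact csInf_le hbdd hmem
      have hd := hdom (γ 0) (γ 1) 1 one_pos
      have heq : (∫ s in (0:ℝ)..1,
          Lag H (_root_.ext γ s) (Hp H (_root_.ext γ s) (ps (_root_.ext γ s)))) =
          ∫ s in (0:ℝ)..1, F (_root_.ext γ s) := by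
        apply intervalIntegral.integral_congr
        intro s _
        show Lag H (_root_.ext γ s) (Hp H (_root_.ext γ s) (ps (_root_.ext γ s)))
          = F (_root_.ext γ s)
        rw [fenchel hH]
      rw [heq] at hfs
      linarith
    have hΦint : Integrable (fun γ : C(ℝ≥0, E n) =>
        (∫ t in (0:ℝ)..1, F (_root_.ext γ t)) + c * 1) μ :=
      ((hfub F hFm (κ * Mv + MH) hFb).1).add (integrable_const _)
    have hsub : Integrable (fun γ : C(ℝ≥0, E n) => ψ (γ 1) - ψ (γ 0)) μ :=
      (hInt ψ hψm Mψ hψb 1).sub (hInt ψ hψm Mψ hψb 0)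
    have hmono := integral_mono_ae hsub hΦint hkey
    have hright : ∫ γ, ((∫ t in (0:ℝ)..1, F (_root_.ext γ t)) + c * 1) ∂μ =
        (∫ γ, F (γ 0) ∂μ) + c := by
      rw [MeasureTheory.integral_add (hfub F hFm (κ * Mv + MH) hFb).1 (integrable_const _),
        (hfub F hFm (κ * Mv + MH) hFb).2, MeasureTheory.integral_const]
      simp
    have hF0 : ∫ γ, F (γ 0) ∂μ = - ∫ γ, Hs (γ 0) ∂μ := by
      have he : (fun γ : C(ℝ≥0, E n) => F (γ 0)) = fun γ => g (γ 0) - Hs (γ 0) := rfl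
      rw [he, integral_sub hIntg hIntHs, hZ, zero_sub]
    rw [hψ0] at hmono
    rw [hright, hF0] at hmono
    show (∫ γ, Hs (γ 0) ∂μ) ≤ c
    linarith


end
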